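/- Let d ≥ 3 be an integer and p ∈ (1/(d-1), 1) be real. Let φ ∈ (0,1) be the unique solution in (0,1) of φ = (pφ + 1 - p)^(d-1), and define χ = 1 - (pφ + 1 - p)^d and ψ = (1/2)·d·p·(1 - φ²). Then 2·(dp/2 - ψ) / (d·(1 - χ)) < 1/(d-1). -/

import Mathlib

/-- Subcriticality inequality for percolation on d-regular graphs after
removing the giant component. -/
theorem subcritical_after_giant (d : ℕ) (hd : 3 ≤ d) (p φ : ℝ)
    (hp : p ∈ Set.Ioo (1/((d:ℝ)-1)) 1) (hφ : φ ∈ Set.Ioo (0:ℝ) 1)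
    (hfix : φ = (p*φ + 1 - p)^(d-1))
    (χ ψ : ℝ) (hχ : χ = 1 - (p*φ + 1 - p)^d)
    (hψ : ψ = (1/2)*(d:ℝ)*p*(1 - φ^2)) :
    2*((d:ℝ)*p/2 - ψ) / ((d:ℝ)*(1 - χ)) < 1/((d:ℝ)-1) := by
  obtain ⟨n, rfl⟩ : ∃ n, d = n + 3 := ⟨d - 3, by omega⟩
  obtain ⟨hp1, hp2⟩ := hp
  obtain ⟨hφ1, hφ2⟩ := hφ
  have hdR : ((n + 3 : ℕ) : ℝ) = (n : ℝ) + 3 := by push_cast; ring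
  have hp0 : 0 < p := by
    have h1 : (0:ℝ) < 1/(((n+3:ℕ):ℝ)-1) := by
      rw [hdR]
      have h2 : ((n:ℝ)+3-1) = (n:ℝ)+2 := by ring
      rw [h2]; positivity
    linarith
  set q : ℝ := p*φ + 1 - p with hq
  have hq1 : q < 1 := by nlinarith
  have hq0 : 0 < q := by nlinarith
  have hsub : (n + 3) - 1 = n + 2 := by omega
  rw [hsub] at hfix
  -- p * (1 - q^(n+2)) = 1 - q
  have hpq : p * (1 - q^(n+2)) = 1 - q := by
    rw [← hfix]; ring_nf; rw [hq]; ring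
  have hφq : φ = q^(n+2) := hfix
  have hqd2 : q ^ (n+2) < 1 := hφq ▸ hφ2
  -- key: (n+2) * q^(n+1) < ∑ i in range (n+2), q^i
  have hkey : ((n:ℝ)+2) * q^(n+1) < ∑ i ∈ Finset.range (n+2), q^i := by
    have := Finset.sum_lt_sum
      (f := fun i => q^(n+1)) (g := fun i => q^i) (s := Finset.range (n+2))
      (fun i hi => pow_le_pow_of_le_one hq0.le hq1.le
        (by simp at hi; omega))
      ⟨0, Finset.mem_range.mpr (by omega), by
        simpa using pow_lt_one₀ hq0.le hq1 (by omega)⟩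
    simpa [Finset.sum_const, Finset.card_range, mul_comm] using this
  have hgeom : (1 - q) * ∑ i ∈ Finset.range (n+2), q^i = 1 - q^(n+2) := by
    have := geom_sum_mul q (n+2)
    nlinarith [this]
  have hkey2 : ((n:ℝ)+2) * (1-q) * q^(n+1) < 1 - q^(n+2) := by
    rw [← hgeom]
    have h1q : 0 < 1 - q := by linarith
    nlinarith [hkey]
  have hmain : ((n:ℝ)+2) * (p * q^(n+1)) < 1 := by
    have hpos : 0 < 1 - q^(n+2) := by linarith
    rw [← hpq] at hkey2
    nlinarith [hkey2, hpos, mul_pos hpos hpos]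
  -- simplify LHS
  have hLHS : 2*(((n+3:ℕ):ℝ)*p/2 - ψ) / (((n+3:ℕ):ℝ)*(1 - χ)) = p * q^(n+1) := by
    have hχ' : 1 - χ = q^(n+3) := by rw [hχ]; ring
    have hnum : 2*(((n+3:ℕ):ℝ)*p/2 - ψ) = ((n:ℝ)+3) * p * q^(n+1) * q^(n+3) := by
      rw [hψ, hφq, hdR]; ring
    have hne1 : ((n:ℝ)+3) ≠ 0 := by positivity
    have hne2 : q^(n+3) ≠ 0 := by positivity
    rw [hnum, hχ', hdR]
    field_simp
  rw [hLHS, hdR]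
  rw [lt_div_iff₀ (by linarith : (0:ℝ) < (n:ℝ)+3-1)]
  nlinarith [hmain]
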